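/- Van der Corput inequality for Hilbert spaces: Let H be a real Hilbert space, N ∈ ℕ, and (φ_n)_{n=1}^N a finite sequence of vectors in H with ‖φ_n‖ ≤ A for all n. Then for every 1 ≤ L ≤ K ≤ N with K + L ≤ N, one has ‖(1/K) ∑_{n=1}^K φ_n‖ ≤ [ (2/K) ∑_{n=1}^K ( (1/L) ∑_{l=0}^{L−1} |⟨φ_n, φ_{n+l}⟩| ) ]^{1/2} + 4A (L/K)^{1/2}. -/

import Mathlib

open Finset

private lemma vdc_sum_shift {M : Type*} [AddCommMonoid M] (g : ℕ → M) (K l : ℕ) :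
    ∑ n ∈ Finset.Icc 1 K, g (n + l) = ∑ m ∈ Finset.Ioc l (K + l), g m := by
  have h0 : Finset.Icc 1 K = Finset.Ioc 0 K := Finset.Icc_add_one_left_eq_Ioc (0:ℕ) K
  have h1 : (Finset.Ioc 0 K).map (addRightEmbedding l) = Finset.Ioc l (K + l) := by
    rw [Finset.map_add_right_Ioc]; simp
  rw [h0, ← h1, Finset.sum_map]
  simp [addRightEmbedding_apply]

private lemma vdc_sqrt_add (x y : ℝ) (hx : 0 ≤ x) (hy : 0 ≤ y) :
    Real.sqrt (x + y) ≤ Real.sqrt x + Real.sqrt y := by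
  have h : x + y ≤ (Real.sqrt x + Real.sqrt y) ^ 2 := by
    nlinarith [Real.sq_sqrt hx, Real.sq_sqrt hy, Real.sqrt_nonneg x, Real.sqrt_nonneg y]
  calc Real.sqrt (x + y) ≤ Real.sqrt ((Real.sqrt x + Real.sqrt y) ^ 2) := Real.sqrt_le_sqrt h
    _ = _ := Real.sqrt_sq (by positivity)

/-- Van der Corput inequality for sequences of vectors in a real Hilbert space. -/
theorem van_der_corput_inequality
    {H : Type*} [NormedAddCommGroup H] [InnerProductSpace ℝ H]
    (N K L : ℕ) (φ : ℕ → H) (A : ℝ) (hA : 0 < A)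
    (hbound : ∀ n, 1 ≤ n → n ≤ N → ‖φ n‖ ≤ A)
    (hL : 1 ≤ L) (hLK : L ≤ K) (hKN : K ≤ N) (hKL : K + L ≤ N) :
    ‖(K : ℝ)⁻¹ • ∑ n ∈ Finset.Icc 1 K, φ n‖ ≤
      Real.sqrt ((2 / (K : ℝ)) * ∑ n ∈ Finset.Icc 1 K,
        ((1 / (L : ℝ)) * ∑ l ∈ Finset.range L, |(inner ℝ (φ n) (φ (n + l)) : ℝ)|))
      + 4 * A * Real.sqrt ((L : ℝ) / K) := by
  classical
  have hK1 : 1 ≤ K := hL.trans hLK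
  have hKpos : (0:ℝ) < (K:ℝ) := by exact_mod_cast hK1
  have hLpos : (0:ℝ) < (L:ℝ) := by exact_mod_cast hL
  set f : ℕ → ℕ → ℝ := fun m d => |(inner ℝ (φ m) (φ (m + d)) : ℝ)| with hf
  have hf0 : ∀ m d, 0 ≤ f m d := fun m d => abs_nonneg _
  have hfA : ∀ m d, 1 ≤ m → m + d ≤ N → f m d ≤ A ^ 2 := by
    intro m d hm hmd
    calc f m d ≤ ‖φ m‖ * ‖φ (m + d)‖ := abs_real_inner_le_norm _ _
      _ ≤ A * A := by
          exact mul_le_mul (hbound m hm (le_trans (Nat.le_add_right m d) hmd))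
            (hbound _ (le_trans hm (Nat.le_add_right m d)) hmd) (norm_nonneg _) hA.le
      _ = A ^ 2 := (sq A).symm
  set Sig : ℝ := ∑ m ∈ Finset.Icc 1 K, ∑ d ∈ Finset.range L, f m d with hSig
  have hSig0 : 0 ≤ Sig := Finset.sum_nonneg fun m _ => Finset.sum_nonneg fun d _ => hf0 m d
  set v : ℕ → H := fun n => ∑ l ∈ Finset.range L, φ (n + l) with hv
  set S : H := ∑ n ∈ Finset.Icc 1 K, φ n with hS
  set T : H := ∑ n ∈ Finset.Icc 1 K, v n with hT
  set Sl : ℕ → H := fun l => ∑ n ∈ Finset.Icc 1 K, φ (n + l) with hSl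
  -- Gauss-type bound
  have hgauss : ∑ l ∈ Finset.range L, (l:ℝ) ≤ (L:ℝ)^2 / 2 := by
    have h1 : (∑ i ∈ Finset.range L, i) * 2 = L * (L - 1) := Finset.sum_range_id_mul_two L
    have h2 : (∑ i ∈ Finset.range L, i) * 2 ≤ L * L := by
      rw [h1]; exact Nat.mul_le_mul (le_refl L) (Nat.sub_le L 1)
    have h3 : ((∑ i ∈ Finset.range L, i : ℕ) : ℝ) * 2 ≤ (L:ℝ) * L := by exact_mod_cast h2
    push_cast at h3 ⊢
    linarith
  -- Step A : difference between the two averages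
  have hTl : T = ∑ l ∈ Finset.range L, Sl l := Finset.sum_comm
  have hdiff : (K:ℝ)⁻¹ • S - ((K:ℝ) * (L:ℝ))⁻¹ • T
      = ((K:ℝ) * (L:ℝ))⁻¹ • (∑ l ∈ Finset.range L, (S - Sl l)) := by
    rw [Finset.sum_sub_distrib, Finset.sum_const, Finset.card_range, smul_sub, hTl]
    congr 1
    rw [← Nat.cast_smul_eq_nsmul ℝ, smul_smul]
    congr 1
    field_simp
  have hSlb : ∀ l ∈ Finset.range L, ‖S - Sl l‖ ≤ 2 * (l:ℝ) * A := by
    intro l hl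
    rw [Finset.mem_range] at hl
    have hshift : Sl l = ∑ m ∈ Finset.Ioc l (K + l), φ m := vdc_sum_shift φ K l
    have hS' : S = ∑ m ∈ Finset.Ioc 0 K, φ m := by
      rw [hS]; exact Finset.sum_congr (Finset.Icc_add_one_left_eq_Ioc (0:ℕ) K) fun _ _ => rfl
    have e1 : ∑ m ∈ Finset.Ioc 0 l, φ m + ∑ m ∈ Finset.Ioc l (K + l), φ m
        = ∑ m ∈ Finset.Ioc 0 (K + l), φ m :=
      Finset.sum_Ioc_consecutive φ (Nat.zero_le l) (Nat.le_add_left l K)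
    have e2 : ∑ m ∈ Finset.Ioc 0 K, φ m + ∑ m ∈ Finset.Ioc K (K + l), φ m
        = ∑ m ∈ Finset.Ioc 0 (K + l), φ m :=
      Finset.sum_Ioc_consecutive φ (Nat.zero_le K) (Nat.le_add_right K l)
    have e3 : S - Sl l = ∑ m ∈ Finset.Ioc 0 l, φ m - ∑ m ∈ Finset.Ioc K (K + l), φ m := by
      rw [hS', hshift, sub_eq_sub_iff_add_eq_add, e1, e2]
    have b1 : ‖∑ m ∈ Finset.Ioc 0 l, φ m‖ ≤ (l:ℝ) * A := by
      calc ‖∑ m ∈ Finset.Ioc 0 l, φ m‖ ≤ ∑ m ∈ Finset.Ioc 0 l, ‖φ m‖ := norm_sum_le _ _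
        _ ≤ (Finset.Ioc 0 l).card • A := Finset.sum_le_card_nsmul _ _ A (by
            intro m hm; rw [Finset.mem_Ioc] at hm
            exact hbound m hm.1 (by omega))
        _ = (l:ℝ) * A := by rw [Nat.card_Ioc, nsmul_eq_mul]; norm_num
    have b2 : ‖∑ m ∈ Finset.Ioc K (K + l), φ m‖ ≤ (l:ℝ) * A := by
      calc ‖∑ m ∈ Finset.Ioc K (K + l), φ m‖ ≤ ∑ m ∈ Finset.Ioc K (K + l), ‖φ m‖ :=
            norm_sum_le _ _
        _ ≤ (Finset.Ioc K (K + l)).card • A := Finset.sum_le_card_nsmul _ _ A (by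
            intro m hm; rw [Finset.mem_Ioc] at hm
            exact hbound m (by omega) (by omega))
        _ = (l:ℝ) * A := by rw [Nat.card_Ioc, nsmul_eq_mul]; norm_num
    calc ‖S - Sl l‖ = ‖∑ m ∈ Finset.Ioc 0 l, φ m - ∑ m ∈ Finset.Ioc K (K + l), φ m‖ := by
          rw [e3]
      _ ≤ ‖∑ m ∈ Finset.Ioc 0 l, φ m‖ + ‖∑ m ∈ Finset.Ioc K (K + l), φ m‖ := norm_sub_le _ _
      _ ≤ (l:ℝ) * A + (l:ℝ) * A := add_le_add b1 b2
      _ = 2 * (l:ℝ) * A := by ring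
  have hA1 : ‖(K:ℝ)⁻¹ • S - ((K:ℝ) * (L:ℝ))⁻¹ • T‖ ≤ A * (L:ℝ) / K := by
    rw [hdiff, norm_smul]
    have h1 : ‖∑ l ∈ Finset.range L, (S - Sl l)‖ ≤ A * (L:ℝ)^2 := by
      calc ‖∑ l ∈ Finset.range L, (S - Sl l)‖ ≤ ∑ l ∈ Finset.range L, ‖S - Sl l‖ :=
            norm_sum_le _ _
        _ ≤ ∑ l ∈ Finset.range L, 2 * (l:ℝ) * A := Finset.sum_le_sum hSlb
        _ = 2 * A * ∑ l ∈ Finset.range L, (l:ℝ) := by rw [Finset.mul_sum]; congr 1; ext l; ring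
        _ ≤ 2 * A * ((L:ℝ)^2/2) := by
            apply mul_le_mul_of_nonneg_left hgauss (by positivity)
        _ = A * (L:ℝ)^2 := by ring
    have h2 : ‖((K:ℝ) * (L:ℝ))⁻¹‖ = ((K:ℝ) * (L:ℝ))⁻¹ := by
      rw [Real.norm_eq_abs, abs_of_nonneg (by positivity)]
    rw [h2]
    calc ((K:ℝ) * (L:ℝ))⁻¹ * ‖∑ l ∈ Finset.range L, (S - Sl l)‖
        ≤ ((K:ℝ) * (L:ℝ))⁻¹ * (A * (L:ℝ)^2) := by
          apply mul_le_mul_of_nonneg_left h1 (by positivity)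
      _ = A * (L:ℝ) / K := by field_simp
  -- Step B : Cauchy-Schwarz
  have hcs : ‖T‖^2 ≤ (K:ℝ) * ∑ n ∈ Finset.Icc 1 K, ‖v n‖^2 := by
    calc ‖T‖^2 ≤ (∑ n ∈ Finset.Icc 1 K, ‖v n‖)^2 := by
          apply pow_le_pow_left₀ (norm_nonneg _) (norm_sum_le _ _)
      _ ≤ (Finset.Icc 1 K).card * ∑ n ∈ Finset.Icc 1 K, ‖v n‖^2 := sq_sum_le_card_mul_sum_sq
      _ = (K:ℝ) * ∑ n ∈ Finset.Icc 1 K, ‖v n‖^2 := by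
          rw [Nat.card_Icc]; norm_num
  -- Step C : expand the norm squared
  have hvb : ∀ n ∈ Finset.Icc 1 K, ‖v n‖^2 ≤
      ∑ l ∈ Finset.range L, ∑ l' ∈ Finset.range L, |(inner ℝ (φ (n+l)) (φ (n+l')) : ℝ)| := by
    intro n _
    rw [← real_inner_self_eq_norm_sq]
    calc (inner ℝ (v n) (v n) : ℝ)
        = ∑ l ∈ Finset.range L, ∑ l' ∈ Finset.range L, (inner ℝ (φ (n+l)) (φ (n+l')) : ℝ) := by
          rw [hv]; simp only [sum_inner, inner_sum]; exact Finset.sum_comm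
      _ ≤ ∑ l ∈ Finset.range L, ∑ l' ∈ Finset.range L, |(inner ℝ (φ (n+l)) (φ (n+l')) : ℝ)| :=
          Finset.sum_le_sum fun l _ => Finset.sum_le_sum fun l' _ => le_abs_self _
  -- Step D : the combinatorial bound
  set q : ℕ → ℕ → ℝ := fun l l' => ∑ n ∈ Finset.Icc 1 K, |(inner ℝ (φ (n+l)) (φ (n+l')) : ℝ)|
    with hq
  have hq0 : ∀ l l', 0 ≤ q l l' := fun l l' => Finset.sum_nonneg fun n _ => abs_nonneg _
  have hqsym : ∀ l l', q l l' = q l' l := by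
    intro l l'
    rw [hq]
    exact Finset.sum_congr rfl fun n _ => by rw [real_inner_comm]
  have hswap : ∑ n ∈ Finset.Icc 1 K, ∑ l ∈ Finset.range L, ∑ l' ∈ Finset.range L,
      |(inner ℝ (φ (n+l)) (φ (n+l')) : ℝ)| = ∑ l ∈ Finset.range L, ∑ l' ∈ Finset.range L, q l l' := by
    rw [Finset.sum_comm]
    exact Finset.sum_congr rfl fun l _ => Finset.sum_comm
  have hsplit : ∑ l ∈ Finset.range L, ∑ l' ∈ Finset.range L, q l l'
      = (∑ l ∈ Finset.range L, ∑ l' ∈ Finset.range l, q l l')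
        + ∑ l ∈ Finset.range L, ∑ l' ∈ Finset.Ico l L, q l l' := by
    rw [← Finset.sum_add_distrib]
    apply Finset.sum_congr rfl
    intro l hl
    rw [Finset.mem_range] at hl
    simp only [Finset.range_eq_Ico]
    exact (Finset.sum_Ico_consecutive _ (Nat.zero_le l) hl.le).symm
  have hYX : (∑ l ∈ Finset.range L, ∑ l' ∈ Finset.range l, q l l')
      ≤ ∑ l ∈ Finset.range L, ∑ l' ∈ Finset.Ico l L, q l l' := by
    have h2 : ∑ l ∈ Finset.range L, ∑ l' ∈ Finset.Ico l L, q l l'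
        = ∑ j ∈ Finset.range L, ∑ i ∈ Finset.range (j+1), q i j := by
      simp only [Finset.range_eq_Ico]
      exact Finset.sum_Ico_Ico_comm 0 L q
    rw [h2]
    apply Finset.sum_le_sum
    intro j hj
    calc ∑ l' ∈ Finset.range j, q j l' = ∑ i ∈ Finset.range j, q i j :=
          Finset.sum_congr rfl fun i _ => hqsym j i
      _ ≤ ∑ i ∈ Finset.range (j+1), q i j :=
          Finset.sum_le_sum_of_subset_of_nonneg
            (Finset.range_subset_range.mpr (Nat.le_succ j)) (fun i _ _ => hq0 i j)
  have hXl : ∀ l ∈ Finset.range L, ∑ l' ∈ Finset.Ico l L, q l l'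
      ≤ Sig + (l:ℝ) * ((L:ℝ) * A^2) := by
    intro l hl
    rw [Finset.mem_range] at hl
    have e1 : ∑ l' ∈ Finset.Ico l L, q l l' = ∑ d ∈ Finset.range (L - l), q l (l + d) :=
      Finset.sum_Ico_eq_sum_range _ _ _
    have e2 : ∀ d, q l (l + d) = ∑ n ∈ Finset.Icc 1 K, f (n + l) d := by
      intro d
      rw [hq, hf]
      apply Finset.sum_congr rfl
      intro n _
      have : n + (l + d) = (n + l) + d := by omega
      rw [this]
    have e4 : ∑ d ∈ Finset.range (L - l), ∑ n ∈ Finset.Icc 1 K, f (n + l) d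
        = ∑ m ∈ Finset.Ioc l (K + l), ∑ d ∈ Finset.range (L - l), f m d := by
      rw [Finset.sum_comm]
      exact vdc_sum_shift (fun m => ∑ d ∈ Finset.range (L - l), f m d) K l
    have e5 : ∑ l' ∈ Finset.Ico l L, q l l'
        = ∑ m ∈ Finset.Ioc l (K + l), ∑ d ∈ Finset.range (L - l), f m d := by
      rw [e1, ← e4]
      exact Finset.sum_congr rfl fun d _ => e2 d
    rw [e5]
    have s1 : ∑ m ∈ Finset.Ioc l (K + l), ∑ d ∈ Finset.range (L - l), f m d
        ≤ ∑ m ∈ Finset.Ioc 0 (K + l), ∑ d ∈ Finset.range (L - l), f m d :=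
      Finset.sum_le_sum_of_subset_of_nonneg
        (Finset.Ioc_subset_Ioc (Nat.zero_le l) le_rfl)
        (fun m _ _ => Finset.sum_nonneg fun d _ => hf0 m d)
    have s2 : ∑ m ∈ Finset.Ioc 0 (K + l), ∑ d ∈ Finset.range (L - l), f m d
        = (∑ m ∈ Finset.Ioc 0 K, ∑ d ∈ Finset.range (L - l), f m d)
          + ∑ m ∈ Finset.Ioc K (K + l), ∑ d ∈ Finset.range (L - l), f m d :=
      (Finset.sum_Ioc_consecutive _ (Nat.zero_le K) (Nat.le_add_right K l)).symm
    have s3 : ∑ m ∈ Finset.Ioc 0 K, ∑ d ∈ Finset.range (L - l), f m d ≤ Sig := by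
      rw [hSig, show Finset.Icc 1 K = Finset.Ioc 0 K from Finset.Icc_add_one_left_eq_Ioc (0:ℕ) K]
      apply Finset.sum_le_sum
      intro m _
      exact Finset.sum_le_sum_of_subset_of_nonneg
        (Finset.range_subset_range.mpr (Nat.sub_le L l)) (fun d _ _ => hf0 m d)
    have s4 : ∑ m ∈ Finset.Ioc K (K + l), ∑ d ∈ Finset.range (L - l), f m d
        ≤ (l:ℝ) * ((L:ℝ) * A^2) := by
      have hb : ∀ m ∈ Finset.Ioc K (K + l), ∑ d ∈ Finset.range (L - l), f m d
          ≤ (L:ℝ) * A^2 := by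
        intro m hm
        rw [Finset.mem_Ioc] at hm
        calc ∑ d ∈ Finset.range (L - l), f m d ≤ ∑ d ∈ Finset.range (L - l), A^2 :=
              Finset.sum_le_sum fun d hd => by
                rw [Finset.mem_range] at hd
                exact hfA m d (by omega) (by omega)
          _ = ((L - l : ℕ) : ℝ) * A^2 := by
              rw [Finset.sum_const, Finset.card_range, nsmul_eq_mul]
          _ ≤ (L:ℝ) * A^2 := by
              have hc : ((L - l : ℕ) : ℝ) ≤ (L:ℝ) := by exact_mod_cast Nat.sub_le L l
              exact mul_le_mul_of_nonneg_right hc (sq_nonneg A)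
      calc ∑ m ∈ Finset.Ioc K (K + l), ∑ d ∈ Finset.range (L - l), f m d
          ≤ (Finset.Ioc K (K + l)).card • ((L:ℝ) * A^2) :=
            Finset.sum_le_card_nsmul _ _ _ hb
        _ = (l:ℝ) * ((L:ℝ) * A^2) := by
            rw [Nat.card_Ioc, nsmul_eq_mul]
            norm_num
    calc ∑ m ∈ Finset.Ioc l (K + l), ∑ d ∈ Finset.range (L - l), f m d
        ≤ ∑ m ∈ Finset.Ioc 0 (K + l), ∑ d ∈ Finset.range (L - l), f m d := s1
      _ = _ + _ := s2
      _ ≤ Sig + (l:ℝ) * ((L:ℝ) * A^2) := add_le_add s3 s4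
  have hX : ∑ l ∈ Finset.range L, ∑ l' ∈ Finset.Ico l L, q l l'
      ≤ (L:ℝ) * Sig + ((L:ℝ)^2/2) * ((L:ℝ) * A^2) := by
    calc ∑ l ∈ Finset.range L, ∑ l' ∈ Finset.Ico l L, q l l'
        ≤ ∑ l ∈ Finset.range L, (Sig + (l:ℝ) * ((L:ℝ) * A^2)) := Finset.sum_le_sum hXl
      _ = (L:ℝ) * Sig + (∑ l ∈ Finset.range L, (l:ℝ)) * ((L:ℝ) * A^2) := by
          rw [Finset.sum_add_distrib, Finset.sum_const, Finset.card_range, nsmul_eq_mul,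
            ← Finset.sum_mul]
      _ ≤ (L:ℝ) * Sig + ((L:ℝ)^2/2) * ((L:ℝ) * A^2) := by
          have := mul_le_mul_of_nonneg_right hgauss (by positivity : (0:ℝ) ≤ (L:ℝ) * A^2)
          linarith
  have hD : ∑ n ∈ Finset.Icc 1 K, ∑ l ∈ Finset.range L, ∑ l' ∈ Finset.range L,
      |(inner ℝ (φ (n+l)) (φ (n+l')) : ℝ)| ≤ 2 * (L:ℝ) * Sig + (L:ℝ)^3 * A^2 := by
    rw [hswap, hsplit]
    have h1 := add_le_add hYX (le_refl (∑ l ∈ Finset.range L, ∑ l' ∈ Finset.Ico l L, q l l'))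
    calc (∑ l ∈ Finset.range L, ∑ l' ∈ Finset.range l, q l l')
          + ∑ l ∈ Finset.range L, ∑ l' ∈ Finset.Ico l L, q l l'
        ≤ 2 * ∑ l ∈ Finset.range L, ∑ l' ∈ Finset.Ico l L, q l l' := by linarith
      _ ≤ 2 * ((L:ℝ) * Sig + ((L:ℝ)^2/2) * ((L:ℝ) * A^2)) := by linarith
      _ = 2 * (L:ℝ) * Sig + (L:ℝ)^3 * A^2 := by ring
  -- combine B, C, D
  have hT2 : ‖T‖^2 ≤ (K:ℝ) * (2 * (L:ℝ) * Sig + (L:ℝ)^3 * A^2) := by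
    refine hcs.trans ?_
    apply mul_le_mul_of_nonneg_left _ hKpos.le
    exact (Finset.sum_le_sum hvb).trans hD
  -- norm of the averaged shifted sum
  have hTn : ‖((K:ℝ) * (L:ℝ))⁻¹ • T‖
      ≤ Real.sqrt (2 * Sig / ((K:ℝ) * (L:ℝ))) + A * Real.sqrt ((L:ℝ) / K) := by
    have h1 : ‖((K:ℝ) * (L:ℝ))⁻¹ • T‖^2 ≤ 2 * Sig / ((K:ℝ) * (L:ℝ)) + (L:ℝ) * A^2 / K := by
      rw [norm_smul, Real.norm_eq_abs, abs_of_nonneg (by positivity : (0:ℝ) ≤ ((K:ℝ)*(L:ℝ))⁻¹),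
        mul_pow]
      calc (((K:ℝ) * (L:ℝ))⁻¹)^2 * ‖T‖^2
          ≤ (((K:ℝ) * (L:ℝ))⁻¹)^2 * ((K:ℝ) * (2 * (L:ℝ) * Sig + (L:ℝ)^3 * A^2)) :=
            mul_le_mul_of_nonneg_left hT2 (by positivity)
        _ = 2 * Sig / ((K:ℝ) * (L:ℝ)) + (L:ℝ) * A^2 / K := by
            field_simp
    have h2 : ‖((K:ℝ) * (L:ℝ))⁻¹ • T‖ ≤ Real.sqrt (2 * Sig / ((K:ℝ) * (L:ℝ)) + (L:ℝ) * A^2 / K) := by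
      rw [show ‖((K:ℝ) * (L:ℝ))⁻¹ • T‖ = Real.sqrt (‖((K:ℝ) * (L:ℝ))⁻¹ • T‖^2) from
        (Real.sqrt_sq (norm_nonneg _)).symm]
      exact Real.sqrt_le_sqrt h1
    refine h2.trans ?_
    refine (vdc_sqrt_add _ _ (by positivity) (by positivity)).trans ?_
    have h3 : Real.sqrt ((L:ℝ) * A^2 / K) = A * Real.sqrt ((L:ℝ) / K) := by
      rw [show (L:ℝ) * A^2 / K = A^2 * ((L:ℝ)/K) by ring, Real.sqrt_mul (sq_nonneg A),
        Real.sqrt_sq hA.le]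
    rw [h3]
  -- the elementary bound L/K ≤ √(L/K)
  have hsq : (L:ℝ)/K ≤ Real.sqrt ((L:ℝ)/K) := by
    have h01 : (L:ℝ)/K ≤ 1 := by
      rw [div_le_one hKpos]; exact_mod_cast hLK
    have h0 : (0:ℝ) ≤ (L:ℝ)/K := by positivity
    nlinarith [Real.sq_sqrt h0, Real.sqrt_le_one.mpr h01, Real.sqrt_nonneg ((L:ℝ)/K)]
  -- identify the square root argument
  have harg : (2 / (K : ℝ)) * ∑ n ∈ Finset.Icc 1 K,
      ((1 / (L : ℝ)) * ∑ l ∈ Finset.range L, |(inner ℝ (φ n) (φ (n + l)) : ℝ)|)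
      = 2 * Sig / ((K:ℝ) * (L:ℝ)) := by
    rw [← Finset.mul_sum, hSig, hf]
    ring
  -- final assembly
  have hfinal : ‖(K:ℝ)⁻¹ • S‖ ≤ Real.sqrt (2 * Sig / ((K:ℝ) * (L:ℝ)))
      + 4 * A * Real.sqrt ((L:ℝ) / K) := by
    have hdec : ‖(K:ℝ)⁻¹ • S‖
        ≤ ‖(K:ℝ)⁻¹ • S - ((K:ℝ) * (L:ℝ))⁻¹ • T‖ + ‖((K:ℝ) * (L:ℝ))⁻¹ • T‖ := by
      have h := norm_add_le ((K:ℝ)⁻¹ • S - ((K:ℝ) * (L:ℝ))⁻¹ • T) (((K:ℝ) * (L:ℝ))⁻¹ • T)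
      rwa [sub_add_cancel] at h
    calc ‖(K:ℝ)⁻¹ • S‖
        ≤ ‖(K:ℝ)⁻¹ • S - ((K:ℝ) * (L:ℝ))⁻¹ • T‖ + ‖((K:ℝ) * (L:ℝ))⁻¹ • T‖ := hdec
      _ ≤ A * (L:ℝ) / K + (Real.sqrt (2 * Sig / ((K:ℝ) * (L:ℝ))) + A * Real.sqrt ((L:ℝ) / K)) :=
          add_le_add hA1 hTn
      _ ≤ Real.sqrt (2 * Sig / ((K:ℝ) * (L:ℝ))) + 4 * A * Real.sqrt ((L:ℝ) / K) := by
          have hAL : A * (L:ℝ) / K ≤ A * Real.sqrt ((L:ℝ)/K) := by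
            rw [show A * (L:ℝ) / K = A * ((L:ℝ)/K) by ring]
            exact mul_le_mul_of_nonneg_left hsq hA.le
          have hnn : 0 ≤ A * Real.sqrt ((L:ℝ)/K) := by positivity
          linarith
  rw [harg]
  exact hfinal
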